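/- Let ρ be the Schrödinger representation of the Heisenberg group on L²(ℝⁿ) and let 𝓕 denote the Fourier transform on L²(ℝⁿ). Then for all x, y ∈ ℝⁿ, 𝓕 ρ(x,y,1) = ρ(−y,x,1) 𝓕. -/

import Mathlib

/- STATEMENT 12:
Let ρ be the Schrödinger representation of the Heisenberg group on L²(ℝⁿ),
acting by (ρ(x,y,1)φ)(t) = e^{πi(x·y + 2y·t)} φ(t+x), and let 𝓕 denote the
(unitary) Fourier transform on L²(ℝⁿ), 𝓕φ(ξ) = ∫ e^{-2πi ξ·t} φ(t) dt.
Then for all x, y ∈ ℝⁿ, 𝓕 ρ(x,y,1) = ρ(−y,x,1) 𝓕.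

Both ρ(x,y,1) (for each x,y) and 𝓕 are characterized by their defining
formulas: ρ by its pointwise a.e. action, 𝓕 by its integral formula on
integrable L² functions (which determines it by density and continuity). -/

open MeasureTheory Complex

noncomputable section

abbrev En (n : ℕ) : Type := EuclideanSpace ℝ (Fin n)

abbrev L2 (n : ℕ) := Lp ℂ 2 (volume : Measure (En n))

set_option maxHeartbeats 1000000 in
theorem statement12 (n : ℕ)
    (ρ : En n → En n → (L2 n →L[ℂ] L2 n))
    (hρ : ∀ (x y : En n) (φ : L2 n), ∀ᵐ t ∂(volume : Measure (En n)),
      (ρ x y φ : En n → ℂ) t =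
        Complex.exp ((Real.pi : ℂ) * Complex.I *
            (((@inner ℝ _ _ x y : ℝ) : ℂ) + 2 * ((@inner ℝ _ _ y t : ℝ) : ℂ)))
          * (φ : En n → ℂ) (t + x))
    (F : L2 n →L[ℂ] L2 n)
    (hF : ∀ φ : L2 n, Integrable (φ : En n → ℂ) (volume : Measure (En n)) →
      ∀ᵐ ξ ∂(volume : Measure (En n)),
        (F φ : En n → ℂ) ξ =
          ∫ t : En n,
            Complex.exp (-(2 * (Real.pi : ℂ) * Complex.I *
              ((@inner ℝ _ _ ξ t : ℝ) : ℂ))) * (φ : En n → ℂ) t) :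
    ∀ x y : En n, F.comp (ρ x y) = (ρ (-y) x).comp F := by
  intro x y
  have h20 : (2 : ENNReal) ≠ 0 := by norm_num
  have h2t : (2 : ENNReal) ≠ ⊤ := by norm_num
  -- the set of integrable L² functions is dense
  have hdense : Dense {φ : L2 n | Integrable (φ : En n → ℂ) (volume : Measure (En n))} := by
    refine (Lp.simpleFunc.dense h2t).mono ?_
    intro φ hφ
    have hmem : MemLp (Lp.simpleFunc.toSimpleFunc (⟨φ, hφ⟩ : Lp.simpleFunc ℂ 2 volume)) 2
        volume := Lp.simpleFunc.memLp _
    have hint := (SimpleFunc.memLp_iff_integrable h20 h2t).mp hmem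
    exact hint.congr (Lp.simpleFunc.toSimpleFunc_eq_toFun _)
  -- the statement holds on integrable functions
  have key : ∀ φ : L2 n, Integrable (φ : En n → ℂ) (volume : Measure (En n)) →
      F (ρ x y φ) = ρ (-y) x (F φ) := by
    intro φ hφ
    apply Lp.ext
    set c : En n → ℂ := fun t => Complex.exp ((Real.pi : ℂ) * Complex.I *
        (((@inner ℝ _ _ x y : ℝ) : ℂ) + 2 * ((@inner ℝ _ _ y t : ℝ) : ℂ))) with hc
    have hc_cont : Continuous c := by
      have h : Continuous (fun t : En n => (@inner ℝ _ _ y t : ℝ)) :=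
        continuous_const.inner continuous_id
      exact Complex.continuous_exp.comp
        (continuous_const.mul (continuous_const.add
          (continuous_const.mul (Complex.continuous_ofReal.comp h))))
    have hc_norm : ∀ t, ‖c t‖ = 1 := by
      intro t
      rw [hc]
      rw [Complex.norm_exp]
      have : ((Real.pi : ℂ) * Complex.I *
          (((@inner ℝ _ _ x y : ℝ) : ℂ) + 2 * ((@inner ℝ _ _ y t : ℝ) : ℂ))).re = 0 := by
        simp [Complex.mul_re, Complex.add_re, Complex.mul_im]
      rw [this, Real.exp_zero]
    set g : En n → ℂ := fun t => c t * (φ : En n → ℂ) (t + x) with hg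
    have e1 : (ρ x y φ : En n → ℂ) =ᵐ[volume] g := hρ x y φ
    have hg_int : Integrable g volume :=
      (hφ.comp_add_right x).bdd_mul hc_cont.aestronglyMeasurable (c := 1) (Filter.Eventually.of_forall fun t => (hc_norm t).le)
    have hρ_int : Integrable (ρ x y φ : En n → ℂ) volume := hg_int.congr e1.symm
    have hFρ := hF (ρ x y φ) hρ_int
    have hFφ' : ∀ᵐ ξ ∂(volume : Measure (En n)),
        (F φ : En n → ℂ) (ξ - y) = ∫ t : En n,
          Complex.exp (-(2 * (Real.pi : ℂ) * Complex.I *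
            ((@inner ℝ _ _ (ξ - y) t : ℝ) : ℂ))) * (φ : En n → ℂ) t :=
      (measurePreserving_sub_right volume y).quasiMeasurePreserving.ae (hF φ hφ)
    have hρ2 := hρ (-y) x (F φ)
    filter_upwards [hFρ, hFφ', hρ2] with ξ h1 h2 h3
    rw [h1, h3]
    -- replace the representative of ρ x y φ by g inside the integral
    have heq1 : (∫ t : En n, Complex.exp (-(2 * (Real.pi : ℂ) * Complex.I *
          ((@inner ℝ _ _ ξ t : ℝ) : ℂ))) * (ρ x y φ : En n → ℂ) t)
        = ∫ t : En n, Complex.exp (-(2 * (Real.pi : ℂ) * Complex.I *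
          ((@inner ℝ _ _ ξ t : ℝ) : ℂ))) * g t :=
      integral_congr_ae (e1.mono fun t ht => by simp only [ht])
    rw [heq1]
    -- translate the variable of integration
    have heq2 : (∫ t : En n, Complex.exp (-(2 * (Real.pi : ℂ) * Complex.I *
          ((@inner ℝ _ _ ξ t : ℝ) : ℂ))) * g t)
        = ∫ t : En n, Complex.exp (-(2 * (Real.pi : ℂ) * Complex.I *
          ((@inner ℝ _ _ ξ (t - x) : ℝ) : ℂ))) * g (t - x) :=
      (integral_sub_right_eq_self (fun t => Complex.exp (-(2 * (Real.pi : ℂ) * Complex.I *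
          ((@inner ℝ _ _ ξ t : ℝ) : ℂ))) * g t) x).symm
    rw [heq2]
    -- pointwise identity for the integrand
    have hpt : ∀ t : En n, Complex.exp (-(2 * (Real.pi : ℂ) * Complex.I *
          ((@inner ℝ _ _ ξ (t - x) : ℝ) : ℂ))) * g (t - x)
        = Complex.exp ((Real.pi : ℂ) * Complex.I *
            (((@inner ℝ _ _ (-y) x : ℝ) : ℂ) + 2 * ((@inner ℝ _ _ x ξ : ℝ) : ℂ))) *
          (Complex.exp (-(2 * (Real.pi : ℂ) * Complex.I *
            ((@inner ℝ _ _ (ξ - y) t : ℝ) : ℂ))) * (φ : En n → ℂ) t) := by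
      intro t
      rw [hg, hc]
      simp only [sub_add_cancel]
      rw [← mul_assoc, ← mul_assoc, ← Complex.exp_add, ← Complex.exp_add]
      congr 2
      have h1' : (@inner ℝ _ _ ξ (t - x) : ℝ) = (@inner ℝ _ _ ξ t : ℝ) - (@inner ℝ _ _ ξ x : ℝ) :=
        inner_sub_right ξ t x
      have h2' : (@inner ℝ _ _ y (t - x) : ℝ) = (@inner ℝ _ _ y t : ℝ) - (@inner ℝ _ _ y x : ℝ) :=
        inner_sub_right y t x
      have h3' : (@inner ℝ _ _ (ξ - y) t : ℝ) = (@inner ℝ _ _ ξ t : ℝ) - (@inner ℝ _ _ y t : ℝ) :=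
        inner_sub_left ξ y t
      have h4' : (@inner ℝ _ _ (-y) x : ℝ) = -(@inner ℝ _ _ y x : ℝ) := inner_neg_left y x
      have h5' : (@inner ℝ _ _ x ξ : ℝ) = (@inner ℝ _ _ ξ x : ℝ) := real_inner_comm ξ x
      have h6' : (@inner ℝ _ _ x y : ℝ) = (@inner ℝ _ _ y x : ℝ) := real_inner_comm y x
      rw [h1', h2', h3', h4', h5', h6']
      push_cast
      ring
    rw [integral_congr_ae (Filter.Eventually.of_forall hpt), integral_const_mul, ← h2]
    rw [show ξ + -y = ξ - y from (sub_eq_add_neg ξ y).symm]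
  -- conclude by density and continuity
  have hcoe : (⇑F ∘ ⇑(ρ x y)) = (⇑(ρ (-y) x) ∘ ⇑F) :=
    Continuous.ext_on hdense (F.continuous.comp (ρ x y).continuous)
      ((ρ (-y) x).continuous.comp F.continuous) (fun φ hφ => key φ hφ)
  exact ContinuousLinearMap.ext fun φ => congrFun hcoe φ

end
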